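/- Let C be a finitely complete centralic category in which regular epimorphisms are stable under binary products. For any two regular epimorphisms q₁ : A → X and q₂ : B → X with common codomain, the object X is commutative if and only if q₁ commutes with q₂. -/

import Mathlib

open CategoryTheory CategoryTheory.Limits

universe v u

/-- A pointed category with binary products is *centralic*. -/
def Centralic (C : Type u) [Category.{v} C] [HasZeroObject C] [HasZeroMorphisms C]
    [HasBinaryProducts C] : Prop :=
  ∀ ⦃X Y Z S : C⦄ (f : X ⨯ Y ⟶ Z) (x x' : S ⟶ X) (y : S ⟶ Y),
    prod.lift x 0 ≫ f = prod.lift x' 0 ≫ f →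
    prod.lift x y ≫ f = prod.lift x' y ≫ f

/-- `ρ : A ⨯ B ⟶ X` is a cooperator for `f : A ⟶ X` and `g : B ⟶ X`. -/
def IsCooperator {C : Type u} [Category.{v} C] [HasZeroObject C] [HasZeroMorphisms C]
    [HasBinaryProducts C] {A B X : C} (f : A ⟶ X) (g : B ⟶ X) (ρ : A ⨯ B ⟶ X) : Prop :=
  prod.lift (𝟙 A) 0 ≫ ρ = f ∧ prod.lift 0 (𝟙 B) ≫ ρ = g

/-- Two morphisms with common codomain commute if they admit a cooperator. -/
def Commutes {C : Type u} [Category.{v} C] [HasZeroObject C] [HasZeroMorphisms C]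
    [HasBinaryProducts C] {A B X : C} (f : A ⟶ X) (g : B ⟶ X) : Prop :=
  ∃ ρ : A ⨯ B ⟶ X, IsCooperator f g ρ

/-- A morphism `f : A ⟶ B` is central if it commutes with `𝟙 B`. -/
def Central {C : Type u} [Category.{v} C] [HasZeroObject C] [HasZeroMorphisms C]
    [HasBinaryProducts C] {A B : C} (f : A ⟶ B) : Prop :=
  Commutes f (𝟙 B)

/-- `q : X ⟶ Q` is a coequalizer of `u v : A ⟶ X`. -/
def IsCoequalizerDiagram {C : Type u} [Category.{v} C] {A X Q : C}
    (u v : A ⟶ X) (q : X ⟶ Q) : Prop :=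
  u ≫ q = v ≫ q ∧ ∀ ⦃Z : C⦄ (h : X ⟶ Z), u ≫ h = v ≫ h → ∃! t : Q ⟶ Z, q ≫ t = h

/-- A morphism is a regular epimorphism if it is the coequalizer of some pair. -/
def IsRegularEpimorphism {C : Type u} [Category.{v} C] {X Q : C} (q : X ⟶ Q) : Prop :=
  ∃ (A : C) (u v : A ⟶ X), IsCoequalizerDiagram u v q

/-- Regular epimorphisms are stable under binary products. -/
def RegularEpisStableUnderProducts (C : Type u) [Category.{v} C] [HasBinaryProducts C] : Prop :=
  ∀ ⦃X₁ Q₁ X₂ Q₂ : C⦄ (q₁ : X₁ ⟶ Q₁) (q₂ : X₂ ⟶ Q₂),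
    IsRegularEpimorphism q₁ → IsRegularEpimorphism q₂ →
    IsRegularEpimorphism (prod.map q₁ q₂)


lemma cancel_of_regular {C : Type u} [Category.{v} C] {X Q : C} {q : X ⟶ Q}
    (hq : IsRegularEpimorphism q) {Z : C} (h h' : Q ⟶ Z) (e : q ≫ h = q ≫ h') : h = h' := by
  obtain ⟨A, u, v, huv, hcoeq⟩ := hq
  have hu : u ≫ (q ≫ h) = v ≫ (q ≫ h) := by
    rw [← Category.assoc, ← Category.assoc, huv]
  obtain ⟨t, ht, huniq⟩ := hcoeq (q ≫ h) hu
  have h1 := huniq h rfl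
  have h2 := huniq h' e.symm
  rw [h1, h2]

/-- An object `X` is commutative iff any two regular epis onto `X` commute. -/
theorem stmt12 (C : Type u) [Category.{v} C] [HasZeroObject C] [HasZeroMorphisms C]
    [HasFiniteLimits C] (hC : Centralic C)
    (hstab : RegularEpisStableUnderProducts C)
    {A B X : C} (q₁ : A ⟶ X) (q₂ : B ⟶ X)
    (hq₁ : IsRegularEpimorphism q₁) (hq₂ : IsRegularEpimorphism q₂) :
    Central (𝟙 X) ↔ Commutes q₁ q₂ := by
  constructor
  · rintro ⟨ρ, h1, h2⟩
    refine ⟨prod.map q₁ q₂ ≫ ρ, ?_, ?_⟩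
    · rw [← Category.assoc, prod.lift_map, Category.id_comp, zero_comp]
      have : prod.lift q₁ (0 : A ⟶ X) = q₁ ≫ prod.lift (𝟙 X) 0 := by
        rw [prod.comp_lift, Category.comp_id, comp_zero]
      rw [this, Category.assoc, h1, Category.comp_id]
    · rw [← Category.assoc, prod.lift_map, Category.id_comp, zero_comp]
      have : prod.lift (0 : B ⟶ X) q₂ = q₂ ≫ prod.lift 0 (𝟙 X) := by
        rw [prod.comp_lift, Category.comp_id, comp_zero]
      rw [this, Category.assoc, h2, Category.comp_id]
  · rintro ⟨φ, h1, h2⟩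
    -- key: for a a' : S ⟶ A, b b' : S ⟶ B with a≫q₁=a'≫q₁, b≫q₂=b'≫q₂,
    -- prod.lift a b ≫ φ = prod.lift a' b' ≫ φ
    have key : ∀ {S : C} (a a' : S ⟶ A) (b b' : S ⟶ B),
        a ≫ q₁ = a' ≫ q₁ → b ≫ q₂ = b' ≫ q₂ →
        prod.lift a b ≫ φ = prod.lift a' b' ≫ φ := by
      intro S a a' b b' ha hb
      have step1 : prod.lift a b ≫ φ = prod.lift a' b ≫ φ := by
        apply hC φ a a' b
        have e1 : prod.lift a (0 : S ⟶ B) = a ≫ prod.lift (𝟙 A) 0 := by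
          rw [prod.comp_lift, Category.comp_id, comp_zero]
        have e2 : prod.lift a' (0 : S ⟶ B) = a' ≫ prod.lift (𝟙 A) 0 := by
          rw [prod.comp_lift, Category.comp_id, comp_zero]
        rw [e1, e2, Category.assoc, Category.assoc, h1, ha]
      have step2 : prod.lift a' b ≫ φ = prod.lift a' b' ≫ φ := by
        have := hC (prod.lift prod.snd prod.fst ≫ φ : B ⨯ A ⟶ X) b b' a' ?_
        · have r1 : prod.lift b a' ≫ (prod.lift prod.snd prod.fst ≫ φ) =
              prod.lift a' b ≫ φ := by
            rw [← Category.assoc, prod.comp_lift, prod.lift_fst, prod.lift_snd]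
          have r2 : prod.lift b' a' ≫ (prod.lift prod.snd prod.fst ≫ φ) =
              prod.lift a' b' ≫ φ := by
            rw [← Category.assoc, prod.comp_lift, prod.lift_fst, prod.lift_snd]
          rw [← r1, ← r2, this]
        · have r1 : prod.lift b (0 : S ⟶ A) ≫ (prod.lift prod.snd prod.fst ≫ φ) =
              prod.lift (0 : S ⟶ A) b ≫ φ := by
            rw [← Category.assoc, prod.comp_lift, prod.lift_fst, prod.lift_snd]
          have r2 : prod.lift b' (0 : S ⟶ A) ≫ (prod.lift prod.snd prod.fst ≫ φ) =
              prod.lift (0 : S ⟶ A) b' ≫ φ := by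
            rw [← Category.assoc, prod.comp_lift, prod.lift_fst, prod.lift_snd]
          have e1 : prod.lift (0 : S ⟶ A) b = b ≫ prod.lift 0 (𝟙 B) := by
            rw [prod.comp_lift, Category.comp_id, comp_zero]
          have e2 : prod.lift (0 : S ⟶ A) b' = b' ≫ prod.lift 0 (𝟙 B) := by
            rw [prod.comp_lift, Category.comp_id, comp_zero]
          rw [r1, r2, e1, e2, Category.assoc, Category.assoc, h2, hb]
      rw [step1, step2]
    obtain ⟨E, u, v, huv, hcoeq⟩ := hstab q₁ q₂ hq₁ hq₂
    have hφ : u ≫ φ = v ≫ φ := by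
      have hu : u = prod.lift (u ≫ prod.fst) (u ≫ prod.snd) := by
        apply Limits.prod.hom_ext
        · erw [prod.lift_fst]
        · erw [prod.lift_snd]
      have hv : v = prod.lift (v ≫ prod.fst) (v ≫ prod.snd) := by
        apply Limits.prod.hom_ext
        · erw [prod.lift_fst]
        · erw [prod.lift_snd]
      have ha : (u ≫ prod.fst) ≫ q₁ = (v ≫ prod.fst) ≫ q₁ := by
        have := congrArg (· ≫ prod.fst) huv
        simpa using this
      have hb : (u ≫ prod.snd) ≫ q₂ = (v ≫ prod.snd) ≫ q₂ := by
        have := congrArg (· ≫ prod.snd) huv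
        simpa using this
      rw [hu, hv]
      exact key _ _ _ _ ha hb
    obtain ⟨t, ht, -⟩ := hcoeq φ hφ
    refine ⟨t, ?_, ?_⟩
    · apply cancel_of_regular hq₁
      rw [Category.comp_id]
      have : q₁ ≫ prod.lift (𝟙 X) 0 ≫ t = prod.lift (𝟙 A) 0 ≫ prod.map q₁ q₂ ≫ t := by
        rw [← Category.assoc, ← Category.assoc, prod.comp_lift, prod.lift_map]
        simp
      rw [this, ht, h1]
    · apply cancel_of_regular hq₂
      rw [Category.comp_id]
      have : q₂ ≫ prod.lift 0 (𝟙 X) ≫ t = prod.lift 0 (𝟙 B) ≫ prod.map q₁ q₂ ≫ t := by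
        rw [← Category.assoc, ← Category.assoc, prod.comp_lift, prod.lift_map]
        simp
      rw [this, ht, h2]
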